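/- arXiv:1910.09149 — 6 statements merged into one kernel-verified Lean document; each statement's English description precedes it below -/
import Mathlib

section
/- Let η, c, θ, λ ∈ ℝ with 0 < η ≤ 1 and c > 0. If θ/η + c < λ and λ < θ·η (i.e., the dual-decomposition conditions for discharging at full power and charging at full power hold simultaneously), then θ < 0 and λ < 0. -/
/-- Remark 2: necessary conditions for spontaneous charging and discharging.
If the full-discharge condition `θ/η + c < λ` and the full-charge condition `λ < θ·η`
hold simultaneously (with `0 < η ≤ 1`, `c > 0`), then `θ < 0` and `λ < 0`. -/
theorem simultaneous_charge_discharge_negative_price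
    (η c θ lam : ℝ) (hη0 : 0 < η) (hη1 : η ≤ 1) (hc : 0 < c)
    (hd : θ / η + c < lam) (hch : lam < θ * η) :
    θ < 0 ∧ lam < 0 := by
  have h : θ < (lam - c) * η := (div_lt_iff₀ hη0).mp (by linarith)
  have hθ : θ < 0 := by
    by_contra hθ
    push_neg at hθ
    have h2 : lam * η < θ * η * η := mul_lt_mul_of_pos_right hch hη0
    have h3 : θ * η * η ≤ θ := by nlinarith [mul_nonneg hθ hη0.le, mul_nonneg (mul_nonneg hθ hη0.le) hη0.le]
    nlinarith [mul_pos hc hη0]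
  exact ⟨hθ, by nlinarith⟩
end

section
/- Fix real numbers v1 ≤ v2 ≤ v3, an efficiency η with 0 < η ≤ 1, and a marginal discharge cost c ≥ 0, and let g : ℝ → ℝ be the associated piecewise marginal-value map (defined in the context). Then g is monotone nondecreasing on ℝ. -/
/-- The piecewise marginal-value map `g` from Theorem 1: the marginal value
`q_{t−1}(e)` of stored energy given a price realization, where `v1, v2, v3` are the
next-period marginal values at the full-charge, idle, and full-discharge ending SoC. -/
noncomputable def marginalValue (v1 v2 v3 η c : ℝ) (p : ℝ) : ℝ :=
  if p < v1 * η then v1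
  else if p < v2 * η then p / η
  else if p < max (v2 / η + c) 0 then v2
  else if p < max (v3 / η + c) 0 then η * (p - c)
  else v3

set_option maxHeartbeats 2000000 in
/-- The piecewise marginal-value map is monotone nondecreasing in the price. -/
theorem marginalValue_monotone
    (v1 v2 v3 η c : ℝ) (h12 : v1 ≤ v2) (h23 : v2 ≤ v3)
    (hη0 : 0 < η) (hη1 : η ≤ 1) (hc : 0 ≤ c) :
    Monotone (marginalValue v1 v2 v3 η c) := by
  intro x y hxy
  unfold marginalValue
  have hη : η ≠ 0 := hη0.ne'
  have e2 : η * (v2 / η) = v2 := mul_div_cancel₀ _ hη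
  have e3 : η * (v3 / η) = v3 := mul_div_cancel₀ _ hη
  have ex : η * (x / η) = x := mul_div_cancel₀ _ hη
  have ey : η * (y / η) = y := mul_div_cancel₀ _ hη
  have hd : x / η ≤ y / η := by gcongr
  split_ifs
  all_goals try simp only [lt_max_iff, not_or, not_lt, max_le_iff] at *
  all_goals try casesm* _ ∧ _, _ ∨ _
  all_goals nlinarith [mul_pos hη0 hη0, mul_nonneg hc hη0.le, sq_nonneg (η - 1), sq_nonneg η]
end

section
/- Fix real numbers v1 ≤ v2 ≤ v3, an efficiency η with 0 < η ≤ 1, and a marginal discharge cost c ≥ 0, and let g : ℝ → ℝ be the associated piecewise marginal-value map (defined in the context). Then for every x ∈ ℝ with v1 ≤ x < v2, the sublevel set {λ ∈ ℝ : g(λ) ≤ x} is exactly the interval (−∞, x·η]. -/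
/-- Second case of Theorem 1: for `v1 ≤ x < v2`, the sublevel set
`{p : g p ≤ x}` equals the interval `(−∞, x·η]`. -/
theorem marginalValue_sublevel_middle_charge
    (v1 v2 v3 η c : ℝ) (h12 : v1 ≤ v2) (h23 : v2 ≤ v3)
    (hη0 : 0 < η) (hη1 : η ≤ 1) (hc : 0 ≤ c) :
    ∀ x : ℝ, v1 ≤ x → x < v2 →
      {p : ℝ | marginalValue v1 v2 v3 η c p ≤ x} = Set.Iic (x * η) := by
  intro x hx1 hx2
  ext p
  simp only [Set.mem_setOf_eq, Set.mem_Iic, marginalValue]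
  constructor
  · intro h
    by_cases h1 : p < v1 * η
    · exact le_trans (le_of_lt h1) (by nlinarith)
    · rw [if_neg h1] at h
      by_cases h2 : p < v2 * η
      · rw [if_pos h2] at h
        calc p = p / η * η := by field_simp
        _ ≤ x * η := by nlinarith
      · exfalso
        rw [if_neg h2] at h
        by_cases h3 : p < max (v2 / η + c) 0
        · rw [if_pos h3] at h; linarith
        · rw [if_neg h3] at h
          push_neg at h3
          have hp : v2 / η + c ≤ p := le_trans (le_max_left _ _) h3
          have hv2 : v2 ≤ η * (p - c) := by
            have : v2 / η ≤ p - c := by linarith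
            calc v2 = v2 / η * η := by field_simp
            _ ≤ (p - c) * η := by nlinarith
            _ = η * (p - c) := by ring
          by_cases h4 : p < max (v3 / η + c) 0
          · rw [if_pos h4] at h; linarith
          · rw [if_neg h4] at h; linarith
  · intro h
    have hlt : x * η < v2 * η := by nlinarith
    by_cases h1 : p < v1 * η
    · rw [if_pos h1]; exact hx1
    · rw [if_neg h1, if_pos (lt_of_le_of_lt h hlt)]
      rw [div_le_iff₀ hη0]; nlinarith
end

section
/- Fix real numbers v1 ≤ v2 ≤ v3, an efficiency η with 0 < η ≤ 1, and a marginal discharge cost c ≥ 0, and let g : ℝ → ℝ be the associated piecewise marginal-value map (defined in the context). Then for every x ∈ ℝ with v2 ≤ x < v3, writing m = max(x/η + c, 0), the sublevel set {λ ∈ ℝ : g(λ) ≤ x} satisfies (−∞, m) ⊆ {λ : g(λ) ≤ x} ⊆ (−∞, m]. -/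
/-- Third case of Theorem 1: for `v2 ≤ x < v3`, with `m = max (x/η + c) 0`,
the sublevel set `{p : g p ≤ x}` is sandwiched between `(−∞, m)` and `(−∞, m]`. -/
theorem marginalValue_sublevel_middle_discharge
    (v1 v2 v3 η c : ℝ) (h12 : v1 ≤ v2) (h23 : v2 ≤ v3)
    (hη0 : 0 < η) (hη1 : η ≤ 1) (hc : 0 ≤ c) :
    ∀ x : ℝ, v2 ≤ x → x < v3 →
      Set.Iio (max (x / η + c) 0) ⊆ {p : ℝ | marginalValue v1 v2 v3 η c p ≤ x} ∧
      {p : ℝ | marginalValue v1 v2 v3 η c p ≤ x} ⊆ Set.Iic (max (x / η + c) 0) := by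
  intro x hx2 hx3
  have hxη : x / η ≤ max (x / η + c) 0 := le_trans (by linarith) (le_max_left _ _)
  -- helper: from p < y*η with y ≤ x, deduce p ≤ m
  have key : ∀ y p : ℝ, y ≤ x → p < y * η → p ≤ max (x / η + c) 0 := by
    intro y p hy hp
    rcases le_or_gt y 0 with hy0 | hy0
    · have : y * η ≤ 0 := mul_nonpos_of_nonpos_of_nonneg hy0 hη0.le
      exact le_trans (by linarith) (le_max_right _ _)
    · have h1 : y * η ≤ y := by nlinarith
      have h2 : x ≤ x / η := by
        rw [le_div_iff₀ hη0]; nlinarith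
      linarith [le_trans (by linarith : p ≤ x / η) hxη]
  constructor
  · intro p hp
    simp only [Set.mem_Iio] at hp
    simp only [Set.mem_setOf_eq, marginalValue]
    split_ifs with h1 h2 h3 h4
    · linarith
    · have : p / η < v2 := (div_lt_iff₀ hη0).2 h2
      linarith
    · exact hx2
    · -- p ≥ max(v2/η + c, 0) ≥ 0, so p < x/η + c
      have hp0 : (0 : ℝ) ≤ p := le_trans (le_max_right _ _) (not_lt.1 h3)
      have hpx : p < x / η + c := by
        rcases lt_max_iff.1 hp with h | h
        · exact h
        · linarith
      have : η * (p - c) < η * (x / η) := by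
        apply mul_lt_mul_of_pos_left _ hη0
        have : p - c < x / η := by linarith
        exact this
      rw [mul_div_cancel₀ _ hη0.ne'] at this
      linarith
    · exfalso
      have hxv3 : x / η ≤ v3 / η := by gcongr
      have : max (x / η + c) 0 ≤ max (v3 / η + c) 0 :=
        max_le_max (by linarith) le_rfl
      exact absurd (lt_of_lt_of_le hp this) h4
  · intro p hp
    simp only [Set.mem_setOf_eq, marginalValue] at hp
    simp only [Set.mem_Iic]
    split_ifs at hp with h1 h2 h3 h4
    · exact key v1 p (le_trans h12 hx2) h1
    · exact key v2 p hx2 h2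
    · -- p < max(v2/η + c, 0) ≤ max(x/η + c, 0)
      have : max (v2 / η + c) 0 ≤ max (x / η + c) 0 := by
        apply max_le_max _ le_rfl
        have : v2 / η ≤ x / η := by gcongr
        linarith
      linarith [lt_of_lt_of_le h3 this]
    · -- η(p−c) ≤ x ⇒ p ≤ x/η + c
      have : p - c ≤ x / η := by
        rw [le_div_iff₀ hη0]; nlinarith
      exact le_trans (by linarith) (le_max_left _ _)
    · linarith
end

section
/- Fix real numbers v1 ≤ v2 ≤ v3, an efficiency η with 0 < η ≤ 1, and a marginal discharge cost c ≥ 0, and let g : ℝ → ℝ be the associated piecewise marginal-value map (defined in the context). Let μ be an atomless probability measure on ℝ (the law of the price λ), and let F(x) = μ((−∞, x]) denote its cumulative distribution function. Then for every x ∈ ℝ, the probability μ({λ : g(λ) ≤ x}) equals: 0 if x < v1; F(x·η) if v1 ≤ x < v2; F(max(x/η + c, 0)) if v2 ≤ x < v3; and 1 if x ≥ v3. -/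
open MeasureTheory

/-- Theorem 1 (SoC price distribution): for an atomless price law `μ` with CDF
`F x = μ (Set.Iic x)`, the cumulative distribution of the marginal arbitrage profit
`g(λ)` is `0` below `v1`, `F(x·η)` on `[v1, v2)`, `F(max(x/η + c, 0))` on
`[v2, v3)`, and `1` from `v3` on. -/
theorem marginalValue_cdf
    (v1 v2 v3 η c : ℝ) (h12 : v1 ≤ v2) (h23 : v2 ≤ v3)
    (hη0 : 0 < η) (hη1 : η ≤ 1) (hc : 0 ≤ c)
    (μ : Measure ℝ) [IsProbabilityMeasure μ] [NullSingletonClass μ]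
    (F : ℝ → ENNReal) (hF : ∀ x : ℝ, F x = μ (Set.Iic x)) :
    ∀ x : ℝ,
      (x < v1 → μ {p : ℝ | marginalValue v1 v2 v3 η c p ≤ x} = 0) ∧
      (v1 ≤ x → x < v2 →
        μ {p : ℝ | marginalValue v1 v2 v3 η c p ≤ x} = F (x * η)) ∧
      (v2 ≤ x → x < v3 →
        μ {p : ℝ | marginalValue v1 v2 v3 η c p ≤ x} = F (max (x / η + c) 0)) ∧
      (v3 ≤ x → μ {p : ℝ | marginalValue v1 v2 v3 η c p ≤ x} = 1) := by
  have hηne : η ≠ 0 := ne_of_gt hη0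
  -- key fact: beyond the third threshold, η*(p-c) ≥ v2
  have key3 : ∀ p : ℝ, ¬ p < max (v2 / η + c) 0 → v2 ≤ η * (p - c) := by
    intro p hp
    push_neg at hp
    rw [max_le_iff] at hp
    obtain ⟨h1, h2⟩ := hp
    have h3 : v2 / η ≤ p - c := by linarith
    have h4 : η * (v2 / η) ≤ η * (p - c) := by
      exact mul_le_mul_of_nonneg_left h3 hη0.le
    rwa [mul_div_cancel₀ v2 hηne] at h4
  intro x
  refine ⟨?_, ?_, ?_, ?_⟩
  · -- x < v1 : empty set
    intro hx
    have hset : {p : ℝ | marginalValue v1 v2 v3 η c p ≤ x} = ∅ := by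
      ext p
      simp only [Set.mem_setOf_eq, Set.mem_empty_iff_false, iff_false, not_le]
      unfold marginalValue
      split_ifs with h1 h2 h3 h4
      · exact hx
      · push_neg at h1
        have : v1 ≤ p / η := by rw [le_div_iff₀ hη0]; linarith
        linarith
      · linarith
      · have := key3 p h3; linarith
      · linarith
    rw [hset, measure_empty]
  · -- v1 ≤ x < v2 : Iic (x*η)
    intro hx1 hx2
    have hset : {p : ℝ | marginalValue v1 v2 v3 η c p ≤ x} = Set.Iic (x * η) := by
      ext p
      simp only [Set.mem_setOf_eq, Set.mem_Iic]
      unfold marginalValue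
      split_ifs with h1 h2 h3 h4
      · constructor
        · intro _; nlinarith
        · intro _; exact hx1
      · rw [div_le_iff₀ hη0, mul_comm]
      · push_neg at h2
        exact iff_of_false (by linarith) (by nlinarith)
      · push_neg at h2
        have := key3 p h3
        exact iff_of_false (by linarith) (by nlinarith)
      · push_neg at h2
        exact iff_of_false (by linarith) (by nlinarith)
    rw [hset, hF]
  · -- v2 ≤ x < v3
    intro hx1 hx2
    rcases le_or_gt 0 (x / η + c) with hm | hm
    · -- set = Iic (x/η + c)
      have hmax : max (x / η + c) 0 = x / η + c := max_eq_left hm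
      -- for a ≤ x we have a*η ≤ x/η + c
      have haux : ∀ a : ℝ, a ≤ x → a * η ≤ x / η + c := by
        intro a ha
        rcases le_or_gt a 0 with h | h
        · have : a * η ≤ 0 := mul_nonpos_of_nonpos_of_nonneg h hη0.le
          linarith
        · have hx0 : 0 < x := lt_of_lt_of_le h ha
          have h1 : x ≤ x / η := by
            rw [le_div_iff₀ hη0]; nlinarith
          have h2 : a * η ≤ a := by nlinarith
          linarith
      have hset : {p : ℝ | marginalValue v1 v2 v3 η c p ≤ x}
          = Set.Iic (x / η + c) := by
        ext p
        simp only [Set.mem_setOf_eq, Set.mem_Iic]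
        unfold marginalValue
        split_ifs with h1 h2 h3 h4
        · have := haux v1 (le_trans h12 hx1)
          exact iff_of_true (le_trans h12 hx1) (by linarith)
        · have hle : p / η < v2 := by rw [div_lt_iff₀ hη0]; exact h2
          have := haux v2 hx1
          exact iff_of_true (by linarith) (by linarith)
        · have hd : max (v2 / η + c) 0 ≤ x / η + c := by
            apply max_le _ hm
            have : v2 / η ≤ x / η := (div_le_div_iff_of_pos_right hη0).mpr hx1
            linarith
          exact iff_of_true hx1 (by linarith)
        · rw [mul_comm, ← le_div_iff₀ hη0, sub_le_iff_le_add]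
        · -- p ≥ max (v3/η + c) 0 : both sides false
          push_neg at h4
          have hv3 : x / η < v3 / η := (div_lt_div_iff_of_pos_right hη0).mpr hx2
          exact iff_of_false (by linarith) (by
            have h5 : v3 / η + c ≤ p := le_trans (le_max_left _ _) h4
            linarith)
      rw [hset, hF, hmax]
    · -- x/η + c < 0 : set = Iio 0
      have hmax : max (x / η + c) 0 = 0 := max_eq_right hm.le
      have hx0 : x < 0 := by
        have : x / η < -c := by linarith
        have : x < -c * η := by
          rw [div_lt_iff₀ hη0] at this; linarith [this]
        nlinarith
      have hd : max (v2 / η + c) 0 = 0 := by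
        apply max_eq_right
        have : v2 / η ≤ x / η := (div_le_div_iff_of_pos_right hη0).mpr hx1
        linarith
      have hset : {p : ℝ | marginalValue v1 v2 v3 η c p ≤ x} = Set.Iio 0 := by
        ext p
        simp only [Set.mem_setOf_eq, Set.mem_Iio]
        unfold marginalValue
        split_ifs with h1 h2 h3 h4
        · have : v1 * η < 0 := by nlinarith [le_trans h12 hx1]
          exact iff_of_true (le_trans h12 hx1) (by linarith)
        · have : v2 * η < 0 := by nlinarith
          have hle : p / η < v2 := by rw [div_lt_iff₀ hη0]; exact h2
          exact iff_of_true (by linarith) (by linarith)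
        · rw [hd] at h3
          exact iff_of_true hx1 h3
        · rw [hd] at h3
          push_neg at h3
          have : -(c * η) ≤ η * (p - c) := by nlinarith
          have hxc : x < -(c * η) := by
            have h6 : x / η < -c := by linarith
            rw [div_lt_iff₀ hη0] at h6
            nlinarith
          exact iff_of_false (by linarith) (by linarith)
        · rw [hd] at h3
          push_neg at h3
          exact iff_of_false (by linarith) (by linarith)
      rw [hset, hF, hmax]
      exact measure_congr (Iio_ae_eq_Iic)
  · -- x ≥ v3 : universal set
    intro hx
    have hset : {p : ℝ | marginalValue v1 v2 v3 η c p ≤ x} = Set.univ := by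
      ext p
      simp only [Set.mem_setOf_eq, Set.mem_univ, iff_true]
      unfold marginalValue
      split_ifs with h1 h2 h3 h4
      · linarith
      · have hle : p / η < v2 := by rw [div_lt_iff₀ hη0]; exact h2
        linarith
      · linarith
      · push_neg at h3
        rw [max_le_iff] at h3
        obtain ⟨ha, hb⟩ := h3
        rcases lt_max_iff.mp h4 with h | h
        · have : η * (p - c) < η * (v3 / η) :=
            mul_lt_mul_of_pos_left (by linarith) hη0
          rw [mul_div_cancel₀ v3 hηne] at this
          linarith
        · linarith
      · exact hx
    rw [hset]
    simpa using measure_univ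
end

section
/- Fix an efficiency η with 0 < η ≤ 1 and a marginal discharge cost c ≥ 0. Let v1 ≤ v2 ≤ v3 and v1' ≤ v2' ≤ v3' be real numbers with v1 ≤ v1', v2 ≤ v2', and v3 ≤ v3', and let g and g' be the piecewise marginal-value maps (defined in the context) associated with (v1, v2, v3) and (v1', v2', v3') respectively. Then g(λ) ≤ g'(λ) for every λ ∈ ℝ. -/
set_option maxHeartbeats 4000000 in
/-- Pointwise monotonicity of the marginal-value map in `(v1, v2, v3)`:
larger next-period marginal values yield a pointwise larger map. -/
theorem marginalValue_mono_in_values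
    (η c : ℝ) (hη0 : 0 < η) (hη1 : η ≤ 1) (hc : 0 ≤ c)
    (v1 v2 v3 v1' v2' v3' : ℝ)
    (h12 : v1 ≤ v2) (h23 : v2 ≤ v3)
    (h12' : v1' ≤ v2') (h23' : v2' ≤ v3')
    (h1 : v1 ≤ v1') (h2 : v2 ≤ v2') (h3 : v3 ≤ v3') :
    ∀ p : ℝ, marginalValue v1 v2 v3 η c p ≤ marginalValue v1' v2' v3' η c p := by
  intro p
  unfold marginalValue
  have hq : p / η * η = p := div_mul_cancel₀ p hη0.ne'
  have hw2 : v2 / η * η = v2 := div_mul_cancel₀ v2 hη0.ne'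
  have hw3 : v3 / η * η = v3 := div_mul_cancel₀ v3 hη0.ne'
  have hw2' : v2' / η * η = v2' := div_mul_cancel₀ v2' hη0.ne'
  have hw3' : v3' / η * η = v3' := div_mul_cancel₀ v3' hη0.ne'
  split_ifs <;>
    simp -failIfUnchanged only [lt_max_iff, not_lt, max_le_iff, not_or] at * <;>
    (try casesm* _ ∧ _, _ ∨ _) <;>
    first
    | linarith
    | nlinarith [hq, hw2, hw3, hw2', hw3', mul_pos hη0 hη0, sq_nonneg (η - 1),
        mul_le_mul_of_nonneg_right h1 hη0.le, mul_le_mul_of_nonneg_right h2 hη0.le,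
        mul_le_mul_of_nonneg_right h3 hη0.le, mul_le_mul_of_nonneg_right h12 hη0.le,
        mul_le_mul_of_nonneg_right h23 hη0.le, mul_le_mul_of_nonneg_right h12' hη0.le,
        mul_le_mul_of_nonneg_right h23' hη0.le, mul_nonneg hc hη0.le]
    | (have hp0 : (0:ℝ) ≤ p := by assumption
       have hlt : p < v1' * η := by assumption
       have hv : (0:ℝ) ≤ v1' := by nlinarith
       nlinarith [mul_nonneg hp0 (sub_nonneg.mpr hη1), mul_nonneg hη0.le hc,
         mul_nonneg hv (sub_nonneg.mpr hη1)])
    | (have hp0 : (0:ℝ) ≤ p := by assumption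
       have hpe : (0:ℝ) ≤ p / η := div_nonneg hp0 hη0.le
       nlinarith [hq, mul_nonneg hpe (sub_nonneg.mpr hη1),
         mul_nonneg hp0 (sub_nonneg.mpr hη1), mul_nonneg hη0.le hc])
    | (have hp0 : (0:ℝ) ≤ p := by assumption
       have hlt : p < v1' * η := by assumption
       have hd : v3 / η + c ≤ p := by assumption
       have hv : (0:ℝ) ≤ v1' := by nlinarith
       nlinarith [hw3, mul_le_mul_of_nonneg_right hd hη0.le,
         mul_nonneg hp0 (sub_nonneg.mpr hη1), mul_nonneg hη0.le hc,
         mul_nonneg hv (sub_nonneg.mpr hη1)])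
    | (have hp0 : (0:ℝ) ≤ p := by assumption
       have hd : v3 / η + c ≤ p := by assumption
       have hpe : (0:ℝ) ≤ p / η := div_nonneg hp0 hη0.le
       nlinarith [hq, hw3, mul_le_mul_of_nonneg_right hd hη0.le,
         mul_nonneg hpe (sub_nonneg.mpr hη1), mul_nonneg hη0.le hc])
end
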